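/- arXiv:1506.07273 — 2 statements merged into one kernel-verified Lean document; each statement's English description precedes it below -/
import Mathlib

section
/- If C ⊆ Rⁿ is a linear code invariant under the (1-2u²)-constacyclic shift ϱ, then its Gray image Φ(C) ⊆ F_p^{2n} is invariant under the cyclic shift, i.e., Φ(C) is a cyclic code of length 2n over F_p. -/
set_option maxHeartbeats 1000000


open Polynomial

abbrev Rp (p : ℕ) := AdjoinRoot (X ^ 3 - X : (ZMod p)[X])
noncomputable def uu (p : ℕ) : Rp p := AdjoinRoot.root _
noncomputable def lam (p : ℕ) : Rp p := 1 - 2 * uu p ^ 2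
noncomputable def am (p : ℕ) : ZMod p →+* Rp p := algebraMap (ZMod p) (Rp p)

noncomputable def rho (p n : ℕ) [NeZero n] (r : Fin n → Rp p) : Fin n → Rp p :=
  fun i => if i = 0 then lam p * r (i - 1) else r (i - 1)

def cshift {α : Type*} {n : ℕ} [NeZero n] (x : Fin n → α) : Fin n → α := fun i => x (i - 1)

noncomputable def enc (p n : ℕ) (a b c : Fin n → ZMod p) : Fin n → Rp p :=
  fun i => am p (a i) + am p (b i) * uu p + am p (c i) * uu p ^ 2

def grayOut (p n : ℕ) (a c : Fin n → ZMod p) : Fin (2 * n) → ZMod p :=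
  fun j =>
    if h : (j : ℕ) < n then - c ⟨j, h⟩
    else 2 * a ⟨(j : ℕ) - n, by have := j.isLt; omega⟩ +
      c ⟨(j : ℕ) - n, by have := j.isLt; omega⟩

lemma fin_sub_one_val {m : ℕ} [NeZero m] (j : Fin m) :
    ((j - 1 : Fin m) : ℕ) = if (j : ℕ) = 0 then m - 1 else (j : ℕ) - 1 := by
  have hm : 0 < m := Nat.pos_of_ne_zero (NeZero.ne m)
  by_cases hm1 : m = 1
  · subst hm1
    have h1 := (j - 1).isLt
    have h2 := j.isLt
    split_ifs with h <;> omega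
  · have h1m : 1 % m = 1 := Nat.mod_eq_of_lt (by omega)
    rw [Fin.sub_def]
    simp only [Fin.val_one', h1m]
    split_ifs with h
    · rw [h, Nat.add_zero]
      exact Nat.mod_eq_of_lt (by omega)
    · have hlt := j.isLt
      have he : m - 1 + (j : ℕ) = ((j : ℕ) - 1) + m := by omega
      rw [he, Nat.add_mod_right]
      exact Nat.mod_eq_of_lt (by omega)

lemma uu_cubed (p : ℕ) : uu p ^ 3 = uu p := by
  have h : AdjoinRoot.mk (X ^ 3 - X : (ZMod p)[X]) (X ^ 3 - X) = 0 := AdjoinRoot.mk_self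
  rw [map_sub, map_pow, AdjoinRoot.mk_X] at h
  exact sub_eq_zero.mp h

lemma exists_abc (p : ℕ) [Fact p.Prime] (x : Rp p) :
    ∃ a b c : ZMod p, x = am p a + am p b * uu p + am p c * uu p ^ 2 := by
  obtain ⟨g, rfl⟩ := AdjoinRoot.mk_surjective x
  set f : (ZMod p)[X] := X ^ 3 - X with hf
  have hmon : f.Monic := by
    have hd : (X : (ZMod p)[X]).degree < 3 := lt_of_le_of_lt degree_X_le (by norm_num)
    simpa using Polynomial.monic_X_pow_sub hd
  have hdeg : f.natDegree = 3 := by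
    rw [hf]; compute_degree!
  have hne1 : f ≠ 1 := by
    intro h
    have := congrArg natDegree h
    simp [hdeg] at this
  have hlt : (g %ₘ f).natDegree < 3 :=
    hdeg ▸ Polynomial.natDegree_modByMonic_lt g hmon hne1
  have hmk : AdjoinRoot.mk f g = AdjoinRoot.mk f (g %ₘ f) := by
    rw [AdjoinRoot.mk_eq_mk]
    exact ⟨g /ₘ f, by linear_combination - Polynomial.modByMonic_add_div g f⟩
  set q := g %ₘ f with hqdef
  have hq : q = C (q.coeff 0) + C (q.coeff 1) * X + C (q.coeff 2) * X ^ 2 := by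
    ext i
    match i with
    | 0 => simp
    | 1 => simp
    | 2 => simp [coeff_X_pow]
    | (m + 3) =>
      have h0 : q.coeff (m + 3) = 0 :=
        Polynomial.coeff_eq_zero_of_natDegree_lt (lt_of_lt_of_le hlt (by omega))
      simp [h0, coeff_X_pow, coeff_X]
  refine ⟨q.coeff 0, q.coeff 1, q.coeff 2, ?_⟩
  rw [hmk]
  conv_lhs => rw [hq]
  simp [am, uu, AdjoinRoot.algebraMap_eq, map_add, map_mul, map_pow, AdjoinRoot.mk_X,
    AdjoinRoot.mk_C]
  rfl

theorem gray_image_of_constacyclic_is_cyclic (p n : ℕ) [Fact p.Prime] (hp : p ≠ 2)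
    [NeZero n] (C : Submodule (Rp p) (Fin n → Rp p))
    (hC : rho p n '' (C : Set (Fin n → Rp p)) = C)
    (Φ : (Fin n → Rp p) → Fin (2 * n) → ZMod p)
    (hΦ : ∀ a b c : Fin n → ZMod p, Φ (enc p n a b c) = grayOut p n a c) :
    cshift '' (Φ '' (C : Set (Fin n → Rp p))) = Φ '' (C : Set (Fin n → Rp p)) := by
  have hn : 0 < n := Nat.pos_of_ne_zero (NeZero.ne n)
  have key : ∀ r : Fin n → Rp p, cshift (Φ r) = Φ (rho p n r) := by
    intro r
    choose a b c habc using fun i => exists_abc p (r i)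
    have hr : r = enc p n a b c := funext fun i => habc i
    set a' : Fin n → ZMod p := fun i => a (i - 1) with ha'
    set b' : Fin n → ZMod p := fun i => if i = 0 then -(b (i - 1)) else b (i - 1) with hb'
    set c' : Fin n → ZMod p :=
      fun i => if i = 0 then -(2 * a (i - 1) + c (i - 1)) else c (i - 1) with hc'
    have hrho : rho p n r = enc p n a' b' c' := by
      funext i
      by_cases h0 : i = 0
      · simp only [rho, enc, if_pos h0, hr, ha', hb', hc', lam, map_neg, map_add, map_mul,
          map_ofNat]
        have hu := uu_cubed p
        linear_combination (-(2 * am p (b (i - 1))) - 2 * am p (c (i - 1)) * uu p) * hu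
      · simp only [rho, enc, if_neg h0, hr, ha', hb', hc']
    rw [hrho, hr, hΦ, hΦ]
    funext j
    have hj := j.isLt
    have hsub := fin_sub_one_val j
    have h01 : ((0 - 1 : Fin n) : ℕ) = n - 1 := by
      rw [fin_sub_one_val]; simp
    simp only [cshift, grayOut]
    by_cases h0 : (j : ℕ) = 0
    · rw [if_pos h0] at hsub
      rw [dif_neg (by omega), dif_pos (by omega)]
      have hcz : (⟨(j : ℕ), by omega⟩ : Fin n) = 0 := by
        ext; simpa using h0
      simp only [hcz, hc', ha', if_pos rfl]
      have e1 : (⟨((j - 1 : Fin (2 * n)) : ℕ) - n, by omega⟩ : Fin n) = (0 - 1 : Fin n) := by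
        ext
        rw [h01]
        show ((j - 1 : Fin (2 * n)) : ℕ) - n = n - 1
        omega
      rw [e1]
      ring
    · rw [if_neg h0] at hsub
      by_cases h1 : (j : ℕ) < n
      · rw [dif_pos (by omega), dif_pos h1]
        have hnz : (⟨(j : ℕ), h1⟩ : Fin n) ≠ 0 := by
          simp [Fin.ext_iff, h0]
        have h03 : (((⟨(j : ℕ), h1⟩ : Fin n) - 1 : Fin n) : ℕ) = (j : ℕ) - 1 := by
          rw [fin_sub_one_val, if_neg (show ¬ (((⟨(j : ℕ), h1⟩ : Fin n)) : ℕ) = 0 from by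
            simpa using h0)]
        simp only [hc', if_neg hnz]
        congr 1
        apply congrArg
        ext
        rw [h03]
        show ((j - 1 : Fin (2 * n)) : ℕ) = (j : ℕ) - 1
        exact hsub
      · by_cases h2 : (j : ℕ) = n
        · rw [dif_pos (by omega), dif_neg (by omega)]
          have hz : (⟨(j : ℕ) - n, by omega⟩ : Fin n) = 0 := by
            ext; simp [h2]
          simp only [hz, hc', ha', if_pos rfl]
          have e1 : (⟨((j - 1 : Fin (2 * n)) : ℕ), by omega⟩ : Fin n) = (0 - 1 : Fin n) := by
            ext
            rw [h01]
            show ((j - 1 : Fin (2 * n)) : ℕ) = n - 1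
            omega
          rw [e1]
          ring
        · rw [dif_neg (by omega), dif_neg (by omega)]
          have hnz : (⟨(j : ℕ) - n, by omega⟩ : Fin n) ≠ 0 := by
            simp only [Fin.ext_iff, Fin.val_zero, ne_eq]
            omega
          simp only [hc', ha', if_neg hnz]
          have h02 : (((⟨(j : ℕ) - n, by omega⟩ : Fin n) - 1 : Fin n) : ℕ) = (j : ℕ) - n - 1 := by
            rw [fin_sub_one_val, if_neg (show ¬ (((⟨(j : ℕ) - n, by omega⟩ : Fin n)) : ℕ) = 0 from by
              simp; omega)]
          have e1 : (⟨((j - 1 : Fin (2 * n)) : ℕ) - n, by omega⟩ : Fin n)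
              = ((⟨(j : ℕ) - n, by omega⟩ : Fin n) - 1) := by
            ext
            rw [h02]
            show ((j - 1 : Fin (2 * n)) : ℕ) - n = (j : ℕ) - n - 1
            omega
          rw [e1]
  ext v
  constructor
  · rintro ⟨w, ⟨r, hrC, rfl⟩, rfl⟩
    have hmem : rho p n r ∈ (C : Set (Fin n → Rp p)) := by
      rw [← hC]; exact ⟨r, hrC, rfl⟩
    exact ⟨rho p n r, hmem, (key r).symm⟩
  · rintro ⟨r, hrC, rfl⟩
    have : r ∈ rho p n '' (C : Set (Fin n → Rp p)) := by rw [hC]; exact hrC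
    obtain ⟨s, hsC, hs⟩ := this
    exact ⟨Φ s, ⟨s, hsC, rfl⟩, by rw [key s, hs]⟩
end

section
/- Let C = η₁C₁ ⊕ η₂C₂ ⊕ η₃C₃ be a linear code of length n over R. Then C is (1-2u²)-constacyclic if and only if C₁ is a cyclic code and C₂, C₃ are negacyclic codes of length n over F_p. -/
open Polynomial

noncomputable def eta1 (p : ℕ) : Rp p := 1 - uu p ^ 2
noncomputable def eta2 (p : ℕ) : Rp p := am p 2⁻¹ * (uu p + uu p ^ 2)
noncomputable def eta3 (p : ℕ) : Rp p := am p 2⁻¹ * (-uu p + uu p ^ 2)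

noncomputable def encEta (p n : ℕ) (x y z : Fin n → ZMod p) : Fin n → Rp p :=
  fun i => eta1 p * am p (x i) + eta2 p * am p (y i) + eta3 p * am p (z i)

noncomputable def comp1 (p n : ℕ) (C : Set (Fin n → Rp p)) : Set (Fin n → ZMod p) :=
  {x | ∃ y z, encEta p n x y z ∈ C}
noncomputable def comp2 (p n : ℕ) (C : Set (Fin n → Rp p)) : Set (Fin n → ZMod p) :=
  {y | ∃ x z, encEta p n x y z ∈ C}
noncomputable def comp3 (p n : ℕ) (C : Set (Fin n → Rp p)) : Set (Fin n → ZMod p) :=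
  {z | ∃ x y, encEta p n x y z ∈ C}

/-- The negacyclic shift on `F_pⁿ`. -/
def nshift {n : ℕ} [NeZero n] {α : Type*} [Ring α] (x : Fin n → α) : Fin n → α :=
  fun i => if i = 0 then - x (i - 1) else x (i - 1)

section Aux

lemma aev0 (p : ℕ) : aeval (0 : ZMod p) (X ^ 3 - X : (ZMod p)[X]) = 0 := by simp
lemma aev1 (p : ℕ) : aeval (1 : ZMod p) (X ^ 3 - X : (ZMod p)[X]) = 0 := by simp
lemma aev2 (p : ℕ) : aeval (-1 : ZMod p) (X ^ 3 - X : (ZMod p)[X]) = 0 := by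
  simp only [map_sub, map_pow, aeval_X]; ring

noncomputable def e0 (p : ℕ) : Rp p →ₐ[ZMod p] ZMod p :=
  AdjoinRoot.liftAlgHom _ (Algebra.ofId _ _) _ (aev0 p)
noncomputable def e1 (p : ℕ) : Rp p →ₐ[ZMod p] ZMod p :=
  AdjoinRoot.liftAlgHom _ (Algebra.ofId _ _) _ (aev1 p)
noncomputable def e2 (p : ℕ) : Rp p →ₐ[ZMod p] ZMod p :=
  AdjoinRoot.liftAlgHom _ (Algebra.ofId _ _) _ (aev2 p)

variable (p : ℕ) [Fact p.Prime]

lemma two_ne (hp : p ≠ 2) : (2 : ZMod p) ≠ 0 := by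
  have : ((2:ℕ) : ZMod p) ≠ 0 := by
    rw [Ne, ZMod.natCast_eq_zero_iff]
    intro h
    exact hp ((Nat.prime_dvd_prime_iff_eq (Fact.out) Nat.prime_two).mp h)
  simpa using this

lemma h2 (hp : p ≠ 2) : am p 2⁻¹ * 2 = 1 := by
  rw [← map_ofNat (am p) 2, ← map_mul, inv_mul_cancel₀ (two_ne p hp), map_one]

lemma h3 : uu p ^ 3 = uu p := by
  have h := AdjoinRoot.mk_self (f := (X ^ 3 - X : (ZMod p)[X]))
  simp only [map_sub, map_pow, AdjoinRoot.mk_X] at h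
  unfold uu
  linear_combination h

lemma lam_eta1 : lam p * eta1 p = eta1 p := by
  unfold lam eta1; linear_combination (2 * uu p) * h3 p

lemma lam_eta2 : lam p * eta2 p = - eta2 p := by
  unfold lam eta2; linear_combination (-(2 * am p 2⁻¹ * (1 + uu p))) * h3 p

lemma lam_eta3 : lam p * eta3 p = - eta3 p := by
  unfold lam eta3; linear_combination (2 * am p 2⁻¹ * (1 - uu p)) * h3 p

lemma eta12 : eta1 p * eta2 p = 0 := by
  unfold eta1 eta2; linear_combination (-(am p 2⁻¹ * (1 + uu p))) * h3 p

lemma eta13 : eta1 p * eta3 p = 0 := by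
  unfold eta1 eta3; linear_combination (am p 2⁻¹ * (1 - uu p)) * h3 p

lemma eta23 : eta2 p * eta3 p = 0 := by
  unfold eta2 eta3; linear_combination (am p 2⁻¹ ^ 2 * uu p) * h3 p

lemma eta1_sq : eta1 p * eta1 p = eta1 p := by
  unfold eta1; linear_combination (uu p) * h3 p

lemma eta2_sq (hp : p ≠ 2) : eta2 p * eta2 p = eta2 p := by
  unfold eta2
  linear_combination (am p 2⁻¹ ^ 2 * (2 + uu p)) * h3 p +
    (am p 2⁻¹ * (uu p + uu p ^ 2)) * h2 p hp

lemma eta3_sq (hp : p ≠ 2) : eta3 p * eta3 p = eta3 p := by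
  unfold eta3
  linear_combination (am p 2⁻¹ ^ 2 * (uu p - 2)) * h3 p +
    (am p 2⁻¹ * (uu p ^ 2 - uu p)) * h2 p hp

@[simp] lemma e0_u : e0 p (uu p) = 0 := by simp [e0, uu]
@[simp] lemma e1_u : e1 p (uu p) = 1 := by simp [e1, uu]
@[simp] lemma e2_u : e2 p (uu p) = -1 := by simp [e2, uu]
@[simp] lemma e0_am (a : ZMod p) : e0 p (am p a) = a := AlgHom.commutes _ a
@[simp] lemma e1_am (a : ZMod p) : e1 p (am p a) = a := AlgHom.commutes _ a
@[simp] lemma e2_am (a : ZMod p) : e2 p (am p a) = a := AlgHom.commutes _ a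

@[simp] lemma e0_eta1 : e0 p (eta1 p) = 1 := by simp [eta1]
@[simp] lemma e0_eta2 : e0 p (eta2 p) = 0 := by simp [eta2]
@[simp] lemma e0_eta3 : e0 p (eta3 p) = 0 := by simp [eta3]
@[simp] lemma e1_eta1 : e1 p (eta1 p) = 0 := by simp [eta1]
@[simp] lemma e1_eta2 (hp : p ≠ 2) : e1 p (eta2 p) = 1 := by
  simp only [eta2, map_mul, map_add, map_pow, e1_u, e1_am]
  linear_combination inv_mul_cancel₀ (two_ne p hp)
@[simp] lemma e1_eta3 : e1 p (eta3 p) = 0 := by simp [eta3]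
@[simp] lemma e2_eta1 : e2 p (eta1 p) = 0 := by simp [eta1]
@[simp] lemma e2_eta2 : e2 p (eta2 p) = 0 := by simp [eta2]
@[simp] lemma e2_eta3 (hp : p ≠ 2) : e2 p (eta3 p) = 1 := by
  simp only [eta3, map_mul, map_add, map_neg, map_pow, e2_u, e2_am]
  linear_combination inv_mul_cancel₀ (two_ne p hp)

lemma eta_sum (hp : p ≠ 2) : eta1 p + eta2 p + eta3 p = 1 := by
  unfold eta1 eta2 eta3
  linear_combination (uu p ^ 2) * h2 p hp

lemma monic3 : (X ^ 3 - X : (ZMod p)[X]).Monic :=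
  Polynomial.monic_X_pow_sub (n := 3) (lt_of_le_of_lt degree_X_le (by norm_num))

lemma deg3 : (X ^ 3 - X : (ZMod p)[X]).natDegree = 3 := by
  have : Nontrivial (ZMod p) := by
    have := Fact.out (p := p.Prime)
    exact ZMod.nontrivial_iff.mpr this.one_lt.ne'
  compute_degree!

noncomputable def Dmap (p : ℕ) : Rp p →ₗ[ZMod p] Rp p where
  toFun r := eta1 p * am p (e0 p r) + eta2 p * am p (e1 p r) + eta3 p * am p (e2 p r)
  map_add' r s := by simp only [map_add, mul_add]; ring
  map_smul' c r := by
    simp only [map_smul, smul_eq_mul, map_mul, RingHom.id_apply]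
    have : c • (eta1 p * am p (e0 p r) + eta2 p * am p (e1 p r) + eta3 p * am p (e2 p r))
        = am p c * (eta1 p * am p (e0 p r) + eta2 p * am p (e1 p r) + eta3 p * am p (e2 p r)) :=
      Algebra.smul_def c _
    rw [this]
    ring

lemma D_eq (hp : p ≠ 2) (r : Rp p) :
    eta1 p * am p (e0 p r) + eta2 p * am p (e1 p r) + eta3 p * am p (e2 p r) = r := by
  have hD : Dmap p = LinearMap.id := by
    apply (AdjoinRoot.powerBasis' (monic3 p)).basis.ext
    intro i
    rw [PowerBasis.basis_eq_pow, AdjoinRoot.powerBasis'_gen,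
      show AdjoinRoot.root (X ^ 3 - X : (ZMod p)[X]) = uu p from rfl]
    obtain ⟨k, hk⟩ := i
    simp only [Fin.val_mk]
    rw [AdjoinRoot.powerBasis'_dim, deg3 p] at hk
    interval_cases k
    · show eta1 p * am p (e0 p (uu p ^ 0)) + eta2 p * am p (e1 p (uu p ^ 0))
        + eta3 p * am p (e2 p (uu p ^ 0)) = LinearMap.id (uu p ^ 0)
      simp only [pow_zero, map_one, mul_one, LinearMap.id_apply]
      exact eta_sum p hp
    · show eta1 p * am p (e0 p (uu p ^ 1)) + eta2 p * am p (e1 p (uu p ^ 1))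
        + eta3 p * am p (e2 p (uu p ^ 1)) = LinearMap.id (uu p ^ 1)
      simp only [pow_one, e0_u, e1_u, e2_u, map_zero, map_one, map_neg, mul_zero, mul_one,
        zero_add, LinearMap.id_apply]
      unfold eta2 eta3
      linear_combination (uu p) * h2 p hp
    · show eta1 p * am p (e0 p (uu p ^ 2)) + eta2 p * am p (e1 p (uu p ^ 2))
        + eta3 p * am p (e2 p (uu p ^ 2)) = LinearMap.id (uu p ^ 2)
      simp only [map_pow, e0_u, e1_u, e2_u, map_zero, map_one, map_neg, mul_zero, mul_one,
        zero_add, LinearMap.id_apply, ne_eq, OfNat.ofNat_ne_zero, not_false_eq_true, zero_pow,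
        one_pow, neg_one_sq]
      unfold eta2 eta3
      linear_combination (uu p ^ 2) * h2 p hp
  exact LinearMap.ext_iff.mp hD r

variable (n : ℕ) [NeZero n]

lemma encEta_add (x y z : Fin n → ZMod p) :
    encEta p n x y z = encEta p n x 0 0 + encEta p n 0 y 0 + encEta p n 0 0 z := by
  funext i
  simp only [encEta, Pi.add_apply, Pi.zero_apply, map_zero, mul_zero, add_zero, zero_add]

lemma smul1 (x y z : Fin n → ZMod p) :
    eta1 p • encEta p n x y z = encEta p n x 0 0 := by
  funext i
  simp only [encEta, Pi.smul_apply, smul_eq_mul, Pi.zero_apply, map_zero, mul_zero, add_zero]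
  linear_combination (am p (x i)) * eta1_sq p + (am p (y i)) * eta12 p + (am p (z i)) * eta13 p

lemma smul2 (hp : p ≠ 2) (x y z : Fin n → ZMod p) :
    eta2 p • encEta p n x y z = encEta p n 0 y 0 := by
  funext i
  simp only [encEta, Pi.smul_apply, smul_eq_mul, Pi.zero_apply, map_zero, mul_zero, add_zero,
    zero_add]
  linear_combination (am p (x i)) * eta12 p + (am p (y i)) * eta2_sq p hp
    + (am p (z i)) * eta23 p

lemma smul3 (hp : p ≠ 2) (x y z : Fin n → ZMod p) :
    eta3 p • encEta p n x y z = encEta p n 0 0 z := by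
  funext i
  simp only [encEta, Pi.smul_apply, smul_eq_mul, Pi.zero_apply, map_zero, mul_zero, add_zero,
    zero_add]
  linear_combination (am p (x i)) * eta13 p + (am p (y i)) * eta23 p
    + (am p (z i)) * eta3_sq p hp

lemma decouple (hp : p ≠ 2) (C : Submodule (Rp p) (Fin n → Rp p)) (x y z : Fin n → ZMod p) :
    encEta p n x y z ∈ C ↔
      (encEta p n x 0 0 ∈ C ∧ encEta p n 0 y 0 ∈ C ∧ encEta p n 0 0 z ∈ C) := by
  constructor
  · intro h
    refine ⟨?_, ?_, ?_⟩
    · have := C.smul_mem (eta1 p) h; rwa [smul1] at this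
    · have := C.smul_mem (eta2 p) h; rwa [smul2 p n hp] at this
    · have := C.smul_mem (eta3 p) h; rwa [smul3 p n hp] at this
  · rintro ⟨h1, h2, h3⟩
    have := C.add_mem (C.add_mem h1 h2) h3
    rwa [← encEta_add] at this

/-- decoders -/
noncomputable def d1v (p n : ℕ) (r : Fin n → Rp p) : Fin n → ZMod p := fun i => e0 p (r i)
noncomputable def d2v (p n : ℕ) (r : Fin n → Rp p) : Fin n → ZMod p := fun i => e1 p (r i)
noncomputable def d3v (p n : ℕ) (r : Fin n → Rp p) : Fin n → ZMod p := fun i => e2 p (r i)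

lemma dec_enc (hp : p ≠ 2) (r : Fin n → Rp p) :
    encEta p n (d1v p n r) (d2v p n r) (d3v p n r) = r := by
  funext i
  exact D_eq p hp (r i)

lemma d1v_enc (x y z : Fin n → ZMod p) : d1v p n (encEta p n x y z) = x := by
  funext i; simp [d1v, encEta]

lemma d2v_enc (hp : p ≠ 2) (x y z : Fin n → ZMod p) : d2v p n (encEta p n x y z) = y := by
  funext i; simp [d2v, encEta, e1_eta2 p hp]

lemma d3v_enc (hp : p ≠ 2) (x y z : Fin n → ZMod p) : d3v p n (encEta p n x y z) = z := by
  funext i; simp [d3v, encEta, e2_eta3 p hp]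

lemma rho_enc (x y z : Fin n → ZMod p) :
    rho p n (encEta p n x y z)
      = encEta p n (cshift x) (nshift y) (nshift z) := by
  funext i
  by_cases hi : i = 0
  · subst hi
    simp only [rho, encEta, cshift, nshift, if_true, eq_self_iff_true, map_neg]
    linear_combination (am p (x (0 - 1))) * lam_eta1 p + (am p (y (0 - 1))) * lam_eta2 p
      + (am p (z (0 - 1))) * lam_eta3 p
  · simp only [rho, encEta, cshift, nshift, if_neg hi]

lemma mem_comp1 (hp : p ≠ 2) (C : Submodule (Rp p) (Fin n → Rp p)) (x : Fin n → ZMod p) :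
    x ∈ comp1 p n C ↔ encEta p n x 0 0 ∈ C := by
  constructor
  · rintro ⟨y, z, h⟩
    exact ((decouple p n hp C x y z).1 h).1
  · intro h
    exact ⟨0, 0, h⟩

lemma mem_comp2 (hp : p ≠ 2) (C : Submodule (Rp p) (Fin n → Rp p)) (y : Fin n → ZMod p) :
    y ∈ comp2 p n C ↔ encEta p n 0 y 0 ∈ C := by
  constructor
  · rintro ⟨x, z, h⟩
    exact ((decouple p n hp C x y z).1 h).2.1
  · intro h
    exact ⟨0, 0, h⟩

lemma mem_comp3 (hp : p ≠ 2) (C : Submodule (Rp p) (Fin n → Rp p)) (z : Fin n → ZMod p) :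
    z ∈ comp3 p n C ↔ encEta p n 0 0 z ∈ C := by
  constructor
  · rintro ⟨x, y, h⟩
    exact ((decouple p n hp C x y z).1 h).2.2
  · intro h
    exact ⟨0, 0, h⟩

lemma comp1_rho (hp : p ≠ 2) (C : Set (Fin n → Rp p)) :
    comp1 p n (rho p n '' C) = cshift '' comp1 p n C := by
  ext w
  constructor
  · rintro ⟨y, z, r, hrC, hr⟩
    refine ⟨d1v p n r, ⟨d2v p n r, d3v p n r, by rw [dec_enc p n hp]; exact hrC⟩, ?_⟩
    have : rho p n r = encEta p n (cshift (d1v p n r)) (nshift (d2v p n r))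
        (nshift (d3v p n r)) := by
      conv_lhs => rw [← dec_enc p n hp r]
      rw [rho_enc]
    rw [this] at hr
    have := congrArg (d1v p n) hr
    rwa [d1v_enc, d1v_enc] at this
  · rintro ⟨x, ⟨y, z, hxyz⟩, rfl⟩
    exact ⟨nshift y, nshift z, encEta p n x y z, hxyz, rho_enc p n x y z⟩

lemma comp2_rho (hp : p ≠ 2) (C : Set (Fin n → Rp p)) :
    comp2 p n (rho p n '' C) = nshift '' comp2 p n C := by
  ext w
  constructor
  · rintro ⟨x, z, r, hrC, hr⟩
    refine ⟨d2v p n r, ⟨d1v p n r, d3v p n r, by rw [dec_enc p n hp]; exact hrC⟩, ?_⟩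
    have : rho p n r = encEta p n (cshift (d1v p n r)) (nshift (d2v p n r))
        (nshift (d3v p n r)) := by
      conv_lhs => rw [← dec_enc p n hp r]
      rw [rho_enc]
    rw [this] at hr
    have := congrArg (d2v p n) hr
    rwa [d2v_enc p n hp, d2v_enc p n hp] at this
  · rintro ⟨y, ⟨x, z, hxyz⟩, rfl⟩
    exact ⟨cshift x, nshift z, encEta p n x y z, hxyz, rho_enc p n x y z⟩

lemma comp3_rho (hp : p ≠ 2) (C : Set (Fin n → Rp p)) :
    comp3 p n (rho p n '' C) = nshift '' comp3 p n C := by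
  ext w
  constructor
  · rintro ⟨x, y, r, hrC, hr⟩
    refine ⟨d3v p n r, ⟨d1v p n r, d2v p n r, by rw [dec_enc p n hp]; exact hrC⟩, ?_⟩
    have : rho p n r = encEta p n (cshift (d1v p n r)) (nshift (d2v p n r))
        (nshift (d3v p n r)) := by
      conv_lhs => rw [← dec_enc p n hp r]
      rw [rho_enc]
    rw [this] at hr
    have := congrArg (d3v p n) hr
    rwa [d3v_enc p n hp, d3v_enc p n hp] at this
  · rintro ⟨z, ⟨x, y, hxyz⟩, rfl⟩
    exact ⟨cshift x, nshift y, encEta p n x y z, hxyz, rho_enc p n x y z⟩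

end Aux

theorem constacyclic_iff_components (p n : ℕ) [Fact p.Prime] (hp : p ≠ 2) [NeZero n]
    (C : Submodule (Rp p) (Fin n → Rp p)) :
    rho p n '' (C : Set (Fin n → Rp p)) = C ↔
      (cshift '' comp1 p n C = comp1 p n C ∧
       nshift '' comp2 p n C = comp2 p n C ∧
       nshift '' comp3 p n C = comp3 p n C) := by
  constructor
  · intro hC
    refine ⟨?_, ?_, ?_⟩
    · rw [← comp1_rho p n hp, hC]
    · rw [← comp2_rho p n hp, hC]
    · rw [← comp3_rho p n hp, hC]
  · rintro ⟨h1, h2, h3⟩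
    apply Set.Subset.antisymm
    · rintro _ ⟨r, hr, rfl⟩
      have hx : cshift (d1v p n r) ∈ comp1 p n (C : Set (Fin n → Rp p)) := by
        rw [← h1]
        exact Set.mem_image_of_mem _
          ⟨d2v p n r, d3v p n r, by rw [dec_enc p n hp]; exact hr⟩
      have hy : nshift (d2v p n r) ∈ comp2 p n (C : Set (Fin n → Rp p)) := by
        rw [← h2]
        exact Set.mem_image_of_mem _
          ⟨d1v p n r, d3v p n r, by rw [dec_enc p n hp]; exact hr⟩
      have hz : nshift (d3v p n r) ∈ comp3 p n (C : Set (Fin n → Rp p)) := by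
        rw [← h3]
        exact Set.mem_image_of_mem _
          ⟨d1v p n r, d2v p n r, by rw [dec_enc p n hp]; exact hr⟩
      have hmem : encEta p n (cshift (d1v p n r)) (nshift (d2v p n r)) (nshift (d3v p n r))
          ∈ C := by
        refine (decouple p n hp C _ _ _).2
          ⟨(mem_comp1 p n hp C _).1 hx, (mem_comp2 p n hp C _).1 hy, (mem_comp3 p n hp C _).1 hz⟩
      have : rho p n r = encEta p n (cshift (d1v p n r)) (nshift (d2v p n r))
          (nshift (d3v p n r)) := by
        conv_lhs => rw [← dec_enc p n hp r]
        rw [rho_enc]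
      rw [this]
      exact hmem
    · intro r hr
      have hx : d1v p n r ∈ cshift '' comp1 p n (C : Set (Fin n → Rp p)) := by
        rw [h1]
        exact ⟨d2v p n r, d3v p n r, by rw [dec_enc p n hp]; exact hr⟩
      have hy : d2v p n r ∈ nshift '' comp2 p n (C : Set (Fin n → Rp p)) := by
        rw [h2]
        exact ⟨d1v p n r, d3v p n r, by rw [dec_enc p n hp]; exact hr⟩
      have hz : d3v p n r ∈ nshift '' comp3 p n (C : Set (Fin n → Rp p)) := by
        rw [h3]
        exact ⟨d1v p n r, d2v p n r, by rw [dec_enc p n hp]; exact hr⟩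
      obtain ⟨x', hx', hxe⟩ := hx
      obtain ⟨y', hy', hye⟩ := hy
      obtain ⟨z', hz', hze⟩ := hz
      refine ⟨encEta p n x' y' z', ?_, ?_⟩
      · exact (decouple p n hp C _ _ _).2
          ⟨(mem_comp1 p n hp C _).1 hx', (mem_comp2 p n hp C _).1 hy',
            (mem_comp3 p n hp C _).1 hz'⟩
      · rw [rho_enc, hxe, hye, hze, dec_enc p n hp]
end
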